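/- For every real number a with 0 < a ≤ 1/4, the logarithmic derivative of the Riemann zeta function satisfies |ζ'(1 + a)/ζ(1 + a)| < 1/a + γ, where γ is the Euler–Mascheroni constant. -/

import Mathlib

open Real

open Real

lemma aux_zeta_lower (a : ℝ) (ha : 0 < a) :
    1 / a ≤ ∑' n : ℕ, 1 / ((n : ℝ) + 1) ^ (1 + a) := by
  have hsum : Summable (fun n : ℕ => 1 / ((n : ℝ) + 1) ^ (1 + a)) := by
    exact_mod_cast (summable_nat_add_iff 1).mpr
      (Real.summable_one_div_nat_rpow.mpr (by linarith))
  have key : ∀ N : ℕ, (1 - ((N : ℝ) + 1) ^ (-a)) / a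
      ≤ ∑' n : ℕ, 1 / ((n : ℝ) + 1) ^ (1 + a) := by
    intro N
    have hanti : AntitoneOn (fun x : ℝ => x ^ (-(1 + a)))
        (Set.Icc ((1 : ℕ) : ℝ) ((N + 1 : ℕ) : ℝ)) := by
      intro x hx y hy hxy
      have hx0 : (0 : ℝ) < x := by
        have := hx.1; push_cast at this; linarith
      show y ^ (-(1 + a)) ≤ x ^ (-(1 + a))
      rw [Real.rpow_neg hx0.le, Real.rpow_neg (hx0.trans_le hxy).le]
      exact inv_anti₀ (Real.rpow_pos_of_pos hx0 _)
        (Real.rpow_le_rpow hx0.le hxy (by linarith))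
    have h1 := hanti.integral_le_sum_Ico (by omega)
    have hint : (∫ x in ((1:ℕ):ℝ)..((N+1:ℕ):ℝ), x ^ (-(1 + a)))
        = (1 - ((N : ℝ) + 1) ^ (-a)) / a := by
      rw [integral_rpow (Or.inr ⟨by intro h; apply absurd h; intro h'; nlinarith, by
        rw [Set.uIcc_of_le (by exact_mod_cast Nat.one_le_iff_ne_zero.mpr (by omega) : ((1:ℕ):ℝ) ≤ ((N+1:ℕ):ℝ))]
        intro h
        have := h.1
        norm_num at this⟩)]
      push_cast
      rw [Real.one_rpow]
      have h2 : -(1 + a) + 1 = -a := by ring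
      rw [h2, div_eq_div_iff (neg_ne_zero.mpr ha.ne') ha.ne']
      ring
    rw [hint] at h1
    refine h1.trans ?_
    have h3 : ∑ x ∈ Finset.Ico 1 (N + 1), ((x : ℝ)) ^ (-(1 + a))
        = ∑ i ∈ Finset.range N, 1 / ((i : ℝ) + 1) ^ (1 + a) := by
      rw [Finset.sum_Ico_eq_sum_range]
      simp only [Nat.add_sub_cancel]
      refine Finset.sum_congr rfl fun i _ => ?_
      have h0 : (0:ℝ) ≤ (i:ℝ) + 1 := by positivity
      rw [Real.rpow_neg (by push_cast; linarith), one_div]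
      congr 1
      push_cast
      ring_nf
    rw [h3]
    exact Summable.sum_le_tsum _ (fun i _ => by positivity) hsum
  have h4 : Filter.Tendsto (fun N : ℕ => ((N : ℝ) + 1) ^ (-a)) Filter.atTop (nhds 0) :=
    (tendsto_rpow_neg_atTop ha).comp
      (Filter.tendsto_atTop_add_const_right _ 1 tendsto_natCast_atTop_atTop)
  have h5 := ((tendsto_const_nhds (x := (1:ℝ))).sub h4).div_const a
  rw [sub_zero] at h5
  exact le_of_tendsto h5 (Filter.Eventually.of_forall key)

lemma aux_hasDerivAt_F (a : ℝ) (ha : 0 < a) {x : ℝ} (hx : 0 < x) :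
    HasDerivAt (fun x : ℝ => -((Real.log x + 1/a) * x ^ (-a)) / a)
      (Real.log x * x ^ (-(1 + a))) x := by
  have h1 : HasDerivAt (fun x : ℝ => Real.log x + 1/a) x⁻¹ x :=
    (Real.hasDerivAt_log hx.ne').add_const _
  have h2 : HasDerivAt (fun x : ℝ => x ^ (-a)) (-a * x ^ (-a - 1)) x :=
    Real.hasDerivAt_rpow_const (Or.inl hx.ne')
  have h3 := ((h1.mul h2).neg).div_const a
  refine h3.congr_deriv ?_
  have hxa : x⁻¹ * x ^ (-a) = x ^ (-a - 1) := by
    rw [← Real.rpow_neg_one x, ← Real.rpow_add hx]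
    ring_nf
  have hexp : -(1 + a) = -a - 1 := by ring
  rw [hexp]
  field_simp
  rw [← hxa]
  field_simp
  ring

lemma aux_log3 : Real.log 3 ≤ 1.104 := by
  have h := Real.log_le_sub_one_of_pos (x := 3 / Real.exp 1) (by positivity)
  rw [Real.log_div (by norm_num) (Real.exp_ne_zero 1), Real.log_exp] at h
  have he : 2.7182818283 < Real.exp 1 := Real.exp_one_gt_d9
  have hp := Real.exp_pos 1
  have : 3 / Real.exp 1 ≤ 3 / 2.7182818283 := by
    apply div_le_div_of_nonneg_left (by norm_num) (by norm_num) he.le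
  nlinarith

lemma aux_hasDerivAt_g (a : ℝ) {x : ℝ} (hx : 0 < x) :
    HasDerivAt (fun x : ℝ => Real.log x * x ^ (-(1 + a)))
      (x⁻¹ * x ^ (-(1 + a)) + Real.log x * (-(1 + a) * x ^ (-(1 + a) - 1))) x :=
  (Real.hasDerivAt_log hx.ne').mul (Real.hasDerivAt_rpow_const (Or.inl hx.ne'))

lemma aux_summable_g (a : ℝ) (ha : 0 < a) :
    Summable (fun n : ℕ => Real.log n * (n : ℝ) ^ (-(1 + a))) := by
  set g : ℝ → ℝ := fun x => Real.log x * x ^ (-(1 + a)) with hg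
  have hgnn : ∀ n : ℕ, 0 ≤ g n := by
    intro n
    rcases Nat.eq_zero_or_pos n with rfl | hn
    · simp [hg]
    · exact mul_nonneg (Real.log_nonneg (by exact_mod_cast hn))
        (Real.rpow_nonneg n.cast_nonneg _)
  have hle : ∀ n : ℕ, g n ≤ (2 / a) * (n : ℝ) ^ (-(1 + a / 2)) := by
    intro n
    rcases Nat.eq_zero_or_pos n with rfl | hn
    · refine le_trans (le_of_eq ?_) (mul_nonneg (by positivity)
        (Real.rpow_nonneg (by norm_num) _))
      simp [hg]
    · have hn0 : (0 : ℝ) < n := by exact_mod_cast hn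
      have hl : Real.log n ≤ (n : ℝ) ^ (a / 2) / (a / 2) :=
        Real.log_le_rpow_div n.cast_nonneg (by positivity)
      calc g n ≤ ((n : ℝ) ^ (a / 2) / (a / 2)) * (n : ℝ) ^ (-(1 + a)) :=
            mul_le_mul_of_nonneg_right hl (Real.rpow_nonneg n.cast_nonneg _)
        _ = (2 / a) * (n : ℝ) ^ (-(1 + a / 2)) := by
            rw [div_mul_eq_mul_div, ← Real.rpow_add hn0,
              show a / 2 + -(1 + a) = -(1 + a / 2) by ring]
            field_simp
  exact Summable.of_nonneg_of_le hgnn hle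
    ((Real.summable_nat_rpow.mpr (by linarith)).mul_left _)

lemma aux_log_upper (a : ℝ) (ha : 0 < a) (ha1 : a ≤ 1) :
    ∑' n : ℕ, Real.log n * (n : ℝ) ^ (-(1 + a)) ≤ 1 / a ^ 2 + 3 / 4 := by
  set g : ℝ → ℝ := fun x => Real.log x * x ^ (-(1 + a)) with hg
  have hgnn : ∀ n : ℕ, 0 ≤ g n := by
    intro n
    rcases Nat.eq_zero_or_pos n with rfl | hn
    · simp [hg]
    · exact mul_nonneg (Real.log_nonneg (by exact_mod_cast hn))
        (Real.rpow_nonneg n.cast_nonneg _)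
  have hsum : Summable (fun n : ℕ => g n) := aux_summable_g a ha
  apply tsum_le_of_sum_range_le hgnn
  intro M
  have hmono : ∑ i ∈ Finset.range M, g i ≤ ∑ i ∈ Finset.range (4 + M), g i :=
    Finset.sum_le_sum_of_subset_of_nonneg (Finset.range_subset_range.mpr (by omega))
      (fun i _ _ => hgnn i)
  refine hmono.trans ?_
  rw [Finset.sum_range_add]
  have h4 : ∑ i ∈ Finset.range 4, g (i : ℝ) = g 2 + g 3 := by
    rw [Finset.sum_range_succ, Finset.sum_range_succ, Finset.sum_range_succ,
      Finset.sum_range_one]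
    norm_num [hg]
  rw [h4]
  -- bound g 2 + g 3 ≤ 3/4
  have hg2 : g 2 ≤ Real.log 2 / 2 := by
    have h2 : (2:ℝ) ^ (-(1+a)) ≤ (2:ℝ) ^ (-1 : ℝ) :=
      Real.rpow_le_rpow_of_exponent_le (by norm_num) (by linarith)
    rw [Real.rpow_neg_one] at h2
    calc g 2 ≤ Real.log 2 * 2⁻¹ :=
          mul_le_mul_of_nonneg_left h2 (Real.log_nonneg (by norm_num))
      _ = Real.log 2 / 2 := by ring
  have hg3 : g 3 ≤ Real.log 3 / 3 := by
    have h2 : (3:ℝ) ^ (-(1+a)) ≤ (3:ℝ) ^ (-1 : ℝ) :=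
      Real.rpow_le_rpow_of_exponent_le (by norm_num) (by linarith)
    rw [Real.rpow_neg_one] at h2
    calc g 3 ≤ Real.log 3 * 3⁻¹ :=
          mul_le_mul_of_nonneg_left h2 (Real.log_nonneg (by norm_num))
      _ = Real.log 3 / 3 := by ring
  have h23 : g 2 + g 3 ≤ 3 / 4 := by
    have hl2 := Real.log_two_lt_d9
    have hl3 := aux_log3
    nlinarith
  -- bound the tail sum by an integral
  have hcont : ∀ c d : ℝ, 0 < c → IntervalIntegrable g MeasureTheory.volume c d → True := fun _ _ _ _ => trivial
  have hInt : ∀ c d : ℝ, 0 < c → c ≤ d → IntervalIntegrable g MeasureTheory.volume c d := by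
    intro c d hc hcd
    apply ContinuousOn.intervalIntegrable
    intro x hx
    rw [Set.uIcc_of_le hcd] at hx
    exact (aux_hasDerivAt_g a (hc.trans_le hx.1)).continuousAt.continuousWithinAt
  have hanti : AntitoneOn g (Set.Icc (3:ℝ) (3 + M)) := by
    apply antitoneOn_of_deriv_nonpos (convex_Icc _ _)
    · intro x hx
      exact (aux_hasDerivAt_g a (by linarith [hx.1])).continuousAt.continuousWithinAt
    · intro x hx
      rw [interior_Icc] at hx
      exact (aux_hasDerivAt_g a (by linarith [hx.1])).differentiableAt.differentiableWithinAt
    · intro x hx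
      rw [interior_Icc] at hx
      have hx3 : (3:ℝ) < x := hx.1
      have hx0 : (0:ℝ) < x := by linarith
      rw [(aux_hasDerivAt_g a hx0).deriv]
      have ht : x⁻¹ * x ^ (-(1+a)) = x ^ (-(1+a) - 1) := by
        rw [← Real.rpow_neg_one x, ← Real.rpow_add hx0]
        ring_nf
      rw [ht]
      have htpos : (0:ℝ) < x ^ (-(1+a) - 1) := Real.rpow_pos_of_pos hx0 _
      have hlx : 1 ≤ Real.log x := by
        rw [Real.le_log_iff_exp_le hx0]
        have := Real.exp_one_lt_d9
        linarith
      have h1a : 1 ≤ (1 + a) * Real.log x := by nlinarith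
      nlinarith [mul_le_mul_of_nonneg_right h1a htpos.le]
  have hsum_le : ∑ i ∈ Finset.range M, g ((4 + i : ℕ) : ℝ)
      ≤ ∫ x in (3:ℝ)..(3 + M : ℝ), g x := by
    have h5 := hanti.sum_le_integral
    refine le_trans (le_of_eq ?_) h5
    refine Finset.sum_congr rfl fun i _ => ?_
    congr 1
    push_cast
    ring
  have hM3 : (3:ℝ) ≤ 3 + (M:ℝ) := by linarith [Nat.cast_nonneg (α := ℝ) M]
  have hFTC := intervalIntegral.integral_eq_sub_of_hasDerivAt
      (f := fun x : ℝ => -((Real.log x + 1/a) * x ^ (-a)) / a) (f' := g)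
      (a := 1) (b := 3 + (M:ℝ))
      (fun x hx => by
        rw [Set.uIcc_of_le (by linarith : (1:ℝ) ≤ 3 + (M:ℝ))] at hx
        exact aux_hasDerivAt_F a ha (by linarith [hx.1]))
      (hInt 1 _ one_pos (by linarith))
  beta_reduce at hFTC
  have h13 : (0:ℝ) ≤ ∫ x in (1:ℝ)..(3:ℝ), g x := by
    apply intervalIntegral.integral_nonneg (by norm_num)
    intro u hu
    exact mul_nonneg (Real.log_nonneg hu.1) (Real.rpow_nonneg (by linarith [hu.1]) _)
  have hadj : (∫ x in (1:ℝ)..(3:ℝ), g x) + (∫ x in (3:ℝ)..(3 + M : ℝ), g x)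
      = ∫ x in (1:ℝ)..(3 + M : ℝ), g x :=
    intervalIntegral.integral_add_adjacent_intervals
      (hInt 1 3 one_pos (by norm_num)) (hInt 3 _ (by norm_num) hM3)
  have hF1 : -((Real.log 1 + 1/a) * (1:ℝ) ^ (-a)) / a = -(1/a^2) := by
    rw [Real.log_one, Real.one_rpow]
    field_simp
    ring
  have hFN : -((Real.log (3 + M) + 1/a) * (3 + (M:ℝ)) ^ (-a)) / a ≤ 0 := by
    apply div_nonpos_of_nonpos_of_nonneg _ ha.le
    rw [neg_nonpos]
    apply mul_nonneg _ (Real.rpow_nonneg (by positivity) _)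
    have h1 : (0:ℝ) ≤ Real.log (3 + M) := Real.log_nonneg (by push_cast; linarith)
    have h2 : (0:ℝ) < 1/a := by positivity
    linarith
  have htail : (∫ x in (3:ℝ)..(3 + M : ℝ), g x) ≤ 1 / a ^ 2 := by
    rw [hF1] at hFTC
    nlinarith [hFN, h13, hadj, hFTC]
  linarith [hsum_le, htail, h23]



/-- For `0 < a ≤ 1/4`: `|ζ'(1+a)/ζ(1+a)| < 1/a + γ`, where `γ` is the
Euler–Mascheroni constant. -/
theorem zeta_logDeriv_bound (a : ℝ) (ha₀ : 0 < a) (ha₁ : a ≤ 1 / 4) :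
    ‖deriv riemannZeta (1 + (a : ℂ)) / riemannZeta (1 + (a : ℂ))‖ <
      1 / a + Real.eulerMascheroniConstant := by
  set s : ℂ := 1 + (a : ℂ) with hs_def
  have hre : 1 < s.re := by
    simp only [hs_def, Complex.add_re, Complex.one_re, Complex.ofReal_re]
    linarith
  -- The denominator: ζ(1+a) is a positive real number.
  set Z : ℝ := ∑' n : ℕ, 1 / ((n : ℝ) + 1) ^ (1 + a) with hZ_def
  have hzeta : riemannZeta s = (Z : ℂ) := by
    rw [zeta_eq_tsum_one_div_nat_add_one_cpow hre, hZ_def, Complex.ofReal_tsum]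
    refine tsum_congr fun n => ?_
    have h0 : (0 : ℝ) ≤ (n : ℝ) + 1 := by positivity
    rw [Complex.ofReal_div, Complex.ofReal_one, Complex.ofReal_cpow h0,
      Complex.ofReal_add, Complex.ofReal_natCast, Complex.ofReal_add,
      Complex.ofReal_one]
  have hZ_ge : 1 / a ≤ Z := aux_zeta_lower a ha₀
  have hZ_pos : 0 < Z := lt_of_lt_of_le (by positivity) hZ_ge
  -- The numerator.
  have hd : deriv riemannZeta s = - LSeries (LSeries.logMul 1) s := by
    have h0 : {z : ℂ | 1 < z.re}.EqOn (LSeries 1) riemannZeta :=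
      fun z hz => LSeries_one_eq_riemannZeta hz
    have hopen : IsOpen {z : ℂ | 1 < z.re} := isOpen_lt continuous_const Complex.continuous_re
    have h1 : deriv riemannZeta s = deriv (LSeries 1) s :=
      (Filter.EventuallyEq.deriv_eq (h0.eventuallyEq_of_mem (hopen.mem_nhds hre))).symm
    rw [h1, LSeries_deriv (by rw [LSeries.abscissaOfAbsConv_one]; exact_mod_cast hre)]
  have hterm : ∀ n : ℕ, ‖LSeries.term (LSeries.logMul 1) s n‖
      = Real.log n * (n : ℝ) ^ (-(1 + a)) := by
    intro n
    rw [LSeries.norm_term_eq]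
    rcases Nat.eq_zero_or_pos n with rfl | hn
    · simp
    · rw [if_neg hn.ne']
      have hsre : s.re = 1 + a := by
        simp [hs_def]
      have hlog : ‖LSeries.logMul 1 n‖ = Real.log n := by
        simp only [LSeries.logMul, Pi.one_apply, mul_one]
        rw [← Complex.natCast_log, Complex.norm_real]
        exact abs_of_nonneg (Real.log_nonneg (by exact_mod_cast hn))
      rw [hlog, hsre, Real.rpow_neg n.cast_nonneg, div_eq_mul_inv]
  have hnum : ‖deriv riemannZeta s‖ ≤ 1 / a ^ 2 + 3 / 4 := by
    rw [hd, norm_neg]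
    have hsumg : Summable (fun n : ℕ => Real.log n * (n : ℝ) ^ (-(1 + a))) := by
      exact aux_summable_g a ha₀
    have hsumn : Summable (fun n : ℕ => ‖LSeries.term (LSeries.logMul 1) s n‖) := by
      refine hsumg.congr fun n => (hterm n).symm
    calc ‖LSeries (LSeries.logMul 1) s‖ ≤ ∑' n, ‖LSeries.term (LSeries.logMul 1) s n‖ :=
          norm_tsum_le_tsum_norm hsumn
      _ = ∑' n : ℕ, Real.log n * (n : ℝ) ^ (-(1 + a)) := tsum_congr hterm
      _ ≤ 1 / a ^ 2 + 3 / 4 := aux_log_upper a ha₀ (by linarith)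
  -- Put it together.
  have habs : ‖deriv riemannZeta s / riemannZeta s‖
      = ‖deriv riemannZeta s‖ / Z := by
    rw [norm_div, hzeta, Complex.norm_real,
      Real.norm_of_nonneg hZ_pos.le]
  rw [habs]
  have hgamma : 1 / 2 < Real.eulerMascheroniConstant :=
    Real.one_half_lt_eulerMascheroniConstant
  have hstep : ‖deriv riemannZeta s‖ / Z ≤ (1 / a ^ 2 + 3 / 4) / (1 / a) :=
    div_le_div₀ (by positivity) hnum (by positivity) hZ_ge
  have heq : (1 / a ^ 2 + 3 / 4) / (1 / a) = 1 / a + 3 * a / 4 := by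
    field_simp
  rw [heq] at hstep
  have : 3 * a / 4 < 1 / 2 := by linarith
  linarith
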